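/- Let $\tau, \lambda > 0$ with $\tau\lambda < 1$, and let $\pi, \pi', \mu$ be probability measures with bounded log-densities relative to each other. Suppose $\int_A f\, d\pi + \frac{1}{\lambda}\operatorname{KL}(\pi|\pi') \le 0$ for some bounded $f$ of the form $f(a) = q(a) + \tau \log\frac{d\pi'}{d\mu}(a)$ with $\|q\|_\infty \le B$. Then $\operatorname{KL}(\pi|\pi') \le \frac{\lambda B}{1-\lambda\tau}$. -/
import Mathlib


open MeasureTheory
open scoped NNReal ENNReal

/-- `f = log dπ/dμ`, `f' = log dπ'/dμ`, `KL(π|π') = ∫ (f - f') dπ`;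
if `∫ (q + τ f') dπ + (1/λ) KL(π|π') ≤ 0` with `‖q‖∞ ≤ B`,
then `KL(π|π') ≤ λ B / (1 - λ τ)`. -/
theorem stmt_18 {A : Type*} [MeasurableSpace A]
    (μ π π' : Measure A) [IsProbabilityMeasure μ]
    [IsProbabilityMeasure π] [IsProbabilityMeasure π']
    (τ lam : ℝ) (hτ : 0 < τ) (hlam : 0 < lam) (hτlam : τ * lam < 1)
    (f f' : A → ℝ) (hf : Measurable f) (hf' : Measurable f')
    (M : ℝ) (hfb : ∀ a, |f a| ≤ M) (hf'b : ∀ a, |f' a| ≤ M)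
    (hπ : π = μ.withDensity (fun a => ENNReal.ofReal (Real.exp (f a))))
    (hπ' : π' = μ.withDensity (fun a => ENNReal.ofReal (Real.exp (f' a))))
    (q : A → ℝ) (hq : Measurable q) (B : ℝ) (hB : ∀ a, |q a| ≤ B)
    (hyp : ∫ a, (q a + τ * f' a) ∂π + (1 / lam) * ∫ a, (f a - f' a) ∂π ≤ 0) :
    ∫ a, (f a - f' a) ∂π ≤ lam * B / (1 - lam * τ) := by
  -- integrability of bounded measurable functions w.r.t. probability measure π
  have hint : ∀ (g : A → ℝ), Measurable g → ∀ C : ℝ, (∀ a, |g a| ≤ C) → Integrable g π := by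
    intro g hg C hC
    exact (integrable_const C).mono' hg.aestronglyMeasurable
      (Filter.Eventually.of_forall fun a => by simpa using hC a)
  have hif : Integrable f π := hint f hf M hfb
  have hif' : Integrable f' π := hint f' hf' M hf'b
  have hiq : Integrable q π := hint q hq B hB
  -- ∫ exp (-f) dπ = 1
  have hd : Measurable fun a => Real.toNNReal (Real.exp (f a)) :=
    (Real.measurable_exp.comp hf).real_toNNReal
  have hexp1 : ∫ a, Real.exp (-(f a)) ∂π = 1 := by
    have hπ2 : π = μ.withDensity (fun a => ((Real.toNNReal (Real.exp (f a)) : ℝ≥0) : ℝ≥0∞)) := hπ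
    rw [hπ2, integral_withDensity_eq_integral_smul hd]
    have : ∀ a, (Real.toNNReal (Real.exp (f a)) : ℝ≥0) • Real.exp (-(f a)) = 1 := by
      intro a
      simp only [NNReal.smul_def, smul_eq_mul]
      rw [Real.coe_toNNReal _ (Real.exp_nonneg _), ← Real.exp_add]
      simp
    simp only [this]
    simp
  -- ∫ f dπ ≥ 0 (nonnegativity of KL(π|μ))
  have hKLμ : 0 ≤ ∫ a, f a ∂π := by
    have hie : Integrable (fun a => Real.exp (-(f a))) π := by
      refine hint _ (Real.measurable_exp.comp hf.neg) (Real.exp M) fun a => ?_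
      rw [abs_of_nonneg (Real.exp_nonneg _)]
      exact Real.exp_le_exp.mpr (by have := abs_le.mp (hfb a); linarith)
    have h1 : ∫ a, (-(f a)) ∂π ≤ ∫ a, (Real.exp (-(f a)) - 1) ∂π := by
      refine integral_mono hif.neg (hie.sub (integrable_const 1)) fun a => ?_
      have := Real.add_one_le_exp (-(f a))
      linarith
    rw [integral_neg, integral_sub hie (integrable_const 1), hexp1] at h1
    simp at h1
    linarith
  -- main computation
  have hK := integral_sub hif hif'
  have hq' : ∫ a, (q a + τ * f' a) ∂π = ∫ a, q a ∂π + τ * ∫ a, f' a ∂π := by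
    rw [integral_add hiq (hif'.const_mul τ), integral_const_mul]
  have hBq : -B ≤ ∫ a, q a ∂π := by
    have : ∫ a, (-B : ℝ) ∂π ≤ ∫ a, q a ∂π :=
      integral_mono (integrable_const _) hiq fun a => (abs_le.mp (hB a)).1
    simpa using this
  set K := ∫ a, (f a - f' a) ∂π with hKdef
  have hf'int : ∫ a, f' a ∂π = ∫ a, f a ∂π - K := by rw [hK]; ring
  rw [hq', hf'int] at hyp
  have hKle : (1 / lam - τ) * K ≤ B := by nlinarith [mul_nonneg hτ.le hKLμ]
  have hpos : 0 < 1 - lam * τ := by nlinarith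
  rw [le_div_iff₀ hpos]
  have h3 : lam * ((1 / lam - τ) * K) = (1 - lam * τ) * K := by
    field_simp
  nlinarith [mul_le_mul_of_nonneg_left hKle hlam.le]
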